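/- Let T be a finite set of 'obstacle balls' B(pᵢ, sᵢ) in ℝⁿ, let Σ be a subset of ℝⁿ that for each s > 0 can be covered by N(s) ≤ A/s² balls of radius s, and let v range over a probability space of translations such that for each fixed ball B(q, s) and each obstacle ball B(pᵢ, sᵢ) with sᵢ ≤ s, the probability that the translate of B(q, s) meets B(pᵢ, sᵢ) is at most C (sᵢ/τ)ⁿ. Then the probability that the translate of Σ meets ⋃ᵢ B(pᵢ, sᵢ) is at most C A τ^{-n} ∑ᵢ sᵢ^{n-2}. -/

import Mathlib

open MeasureTheory Metric
open scoped ENNReal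

/-- Union-bound transversality estimate: if `Σ` can be covered at every scale `s` by at
most `A/s²` balls of radius `s`, and for each ball `B(q,s)` and each obstacle ball
`B(pᵢ,sᵢ)` with `sᵢ ≤ s` the probability that a random translate of `B(q,s)` meets
`B(pᵢ,sᵢ)` is at most `C (sᵢ/τ)ⁿ`, then the probability that a random translate of `Σ`
meets `⋃ᵢ B(pᵢ,sᵢ)` is at most `C A τ^{-n} ∑ᵢ sᵢ^{n-2}`. -/
theorem random_translate_avoids_obstacles
    (n : ℕ) {V : Type*} [MeasurableSpace V] (ρ : Measure V) [IsProbabilityMeasure ρ]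
    (tr : V → EuclideanSpace ℝ (Fin n))
    (Sig : Set (EuclideanSpace ℝ (Fin n))) (A τ C : ℝ) (hA : 0 < A) (hτ : 0 < τ) (hC : 0 < C)
    {ι : Type*} [Fintype ι] (p : ι → EuclideanSpace ℝ (Fin n)) (s : ι → ℝ)
    (hs : ∀ i, 0 < s i)
    (hcov : ∀ t : ℝ, 0 < t → ∃ F : Finset (EuclideanSpace ℝ (Fin n)),
      (F.card : ℝ) ≤ A / t ^ 2 ∧ Sig ⊆ ⋃ q ∈ F, ball q t)
    (hprob : ∀ (q : EuclideanSpace ℝ (Fin n)) (t : ℝ), 0 < t → ∀ i, s i ≤ t →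
      ρ {v | (((· + tr v) '' ball q t) ∩ ball (p i) (s i)).Nonempty} ≤
        ENNReal.ofReal (C * (s i / τ) ^ n)) :
    ρ {v | (((· + tr v) '' Sig) ∩ ⋃ i, ball (p i) (s i)).Nonempty} ≤
      ENNReal.ofReal (C * A * τ ^ (-(n : ℝ)) * ∑ i, (s i) ^ ((n : ℝ) - 2)) := by

  classical
  have key : ∀ i, ρ {v | (((· + tr v) '' Sig) ∩ ball (p i) (s i)).Nonempty} ≤
      ENNReal.ofReal (C * A * τ ^ (-(n : ℝ)) * (s i) ^ ((n : ℝ) - 2)) := by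
    intro i
    obtain ⟨F, hFcard, hFcov⟩ := hcov (s i) (hs i)
    have hsub : {v | (((· + tr v) '' Sig) ∩ ball (p i) (s i)).Nonempty} ⊆
        ⋃ q ∈ F, {v | (((· + tr v) '' ball q (s i)) ∩ ball (p i) (s i)).Nonempty} := by
      rintro v ⟨x, ⟨y, hy, rfl⟩, hx⟩
      have := hFcov hy
      simp only [Set.mem_iUnion] at this
      obtain ⟨q, hqF, hyq⟩ := this
      exact Set.mem_biUnion hqF ⟨y + tr v, ⟨y, hyq, rfl⟩, hx⟩
    have halg : (A / (s i) ^ 2) * (C * (s i / τ) ^ n)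
        = C * A * τ ^ (-(n : ℝ)) * (s i) ^ ((n : ℝ) - 2) := by
      rw [Real.rpow_neg hτ.le, Real.rpow_natCast,
        Real.rpow_sub (hs i), Real.rpow_natCast, Real.rpow_two, div_pow]
      field_simp
    calc ρ {v | (((· + tr v) '' Sig) ∩ ball (p i) (s i)).Nonempty}
        ≤ ∑ q ∈ F, ρ {v | (((· + tr v) '' ball q (s i)) ∩ ball (p i) (s i)).Nonempty} :=
          (measure_mono hsub).trans (measure_biUnion_finset_le F _)
      _ ≤ ∑ _q ∈ F, ENNReal.ofReal (C * (s i / τ) ^ n) :=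
          Finset.sum_le_sum fun q _ => hprob q (s i) (hs i) i le_rfl
      _ = (F.card : ℝ≥0∞) * ENNReal.ofReal (C * (s i / τ) ^ n) := by
          rw [Finset.sum_const, nsmul_eq_mul]
      _ ≤ ENNReal.ofReal (A / (s i) ^ 2) * ENNReal.ofReal (C * (s i / τ) ^ n) := by
          gcongr
          rw [show ((F.card : ℝ≥0∞)) = ENNReal.ofReal (F.card : ℝ) by
            simp [ENNReal.ofReal_natCast]]
          exact ENNReal.ofReal_le_ofReal hFcard
      _ = ENNReal.ofReal ((A / (s i) ^ 2) * (C * (s i / τ) ^ n)) := by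
          rw [← ENNReal.ofReal_mul (by positivity)]
      _ = ENNReal.ofReal (C * A * τ ^ (-(n : ℝ)) * (s i) ^ ((n : ℝ) - 2)) := by rw [halg]
  have hsubU : {v | (((· + tr v) '' Sig) ∩ ⋃ i, ball (p i) (s i)).Nonempty} ⊆
      ⋃ i, {v | (((· + tr v) '' Sig) ∩ ball (p i) (s i)).Nonempty} := by
    rintro v ⟨x, hx, hxU⟩
    simp only [Set.mem_iUnion] at hxU
    obtain ⟨i, hi⟩ := hxU
    exact Set.mem_iUnion.2 ⟨i, x, hx, hi⟩
  calc ρ {v | (((· + tr v) '' Sig) ∩ ⋃ i, ball (p i) (s i)).Nonempty}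
      ≤ ∑ i, ρ {v | (((· + tr v) '' Sig) ∩ ball (p i) (s i)).Nonempty} :=
        (measure_mono hsubU).trans (measure_iUnion_fintype_le ρ _)
    _ ≤ ∑ i, ENNReal.ofReal (C * A * τ ^ (-(n : ℝ)) * (s i) ^ ((n : ℝ) - 2)) :=
        Finset.sum_le_sum fun i _ => key i
    _ = ENNReal.ofReal (∑ i, C * A * τ ^ (-(n : ℝ)) * (s i) ^ ((n : ℝ) - 2)) := by
        rw [ENNReal.ofReal_sum_of_nonneg]
        intro i _
        have := (hs i)
        positivity
    _ = ENNReal.ofReal (C * A * τ ^ (-(n : ℝ)) * ∑ i, (s i) ^ ((n : ℝ) - 2)) := by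
        rw [← Finset.mul_sum]
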